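/- Let F be a field, let P_d ∈ F^{n×n}, let t ≥ 1, and let M_{12}(λ) be an n×tn matrix pencil over F, partitioned into n×n blocks M_{12}^{(1)}(λ), …, M_{12}^{(t)}(λ). Then M_{12}(λ)(Λ_{t−1}(λ)⊗I_n) = λ^t P_d if and only if there exist matrices W_0, W_1, …, W_t ∈ F^{n×n} with W_0 = −P_d and W_t = 0 such that M_{12}^{(j)}(λ) = −λ W_{j−1} + W_j for j = 1, …, t; equivalently, M_{12}(λ) = [λP_d + W_1 | −λW_1 + W_2 | ⋯ | −λW_{t−2} + W_{t−1} | −λW_{t−1}] for arbitrary W_1, …, W_{t−1} ∈ F^{n×n}. -/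

import Mathlib

open Polynomial Matrix
open scoped Kronecker

noncomputable section

/-- Entrywise inclusion of a constant matrix into polynomial matrices. -/
def matC {F : Type} [Field F] {m l : Type*} (M : Matrix m l F) : Matrix m l (Polynomial F) :=
  M.map fun a => (C a : Polynomial F)

/-- The pencil `λ ↦ A + λ B`, represented as a matrix over `F[λ]`. -/
def pencil {F : Type} [Field F] {m l : Type*} (A B : Matrix m l F) :
    Matrix m l (Polynomial F) :=
  matC A + (X : Polynomial F) • matC B

/-- Grade-`g` reversal `rev_g`, applied entrywise. -/
def revMat {F : Type} [Field F] {m l : Type*} (g : ℕ) (M : Matrix m l (Polynomial F)) :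
    Matrix m l (Polynomial F) :=
  M.map fun q => q.reflect g

/-- Entrywise evaluation of a polynomial matrix at a point. -/
def evalMat {F : Type} [Field F] {m l : Type*} (a : F) (M : Matrix m l (Polynomial F)) :
    Matrix m l F :=
  M.map fun q => q.eval a

/-- The matrix polynomial `P(λ) = ∑_{k=0}^d λ^k P_k` built from its coefficients. -/
def polyOfCoeffs {F : Type} [Field F] {n : ℕ} (d : ℕ) (Pc : ℕ → Matrix (Fin n) (Fin n) F) :
    Matrix (Fin n) (Fin n) (Polynomial F) :=
  ∑ k ∈ Finset.range (d + 1), (X : Polynomial F) ^ k • matC (Pc k)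

/-- The `(i,j)` block of a block-partitioned matrix. -/
def blk {α p q n m : Type*} (A : Matrix (p × n) (q × m) α) (i : p) (j : q) :
    Matrix n m α :=
  Matrix.of fun r c => A (i, r) (j, c)

/-- `Λ_s(λ) ⊗ I_n`, an `(s+1)n × n` polynomial matrix whose `i`-th block is `λ^{s-i} I_n`. -/
def Lam (F : Type) [Field F] (s n : ℕ) :
    Matrix (Fin (s+1) × Fin n) (Fin n) (Polynomial F) :=
  Matrix.of fun p c => if p.2 = c then (X : Polynomial F) ^ (s - (p.1 : ℕ)) else 0

/-- The pencil `L_s(λ) ∈ F[λ]^{s×(s+1)}` with `-1` on the diagonal and `λ` on the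
superdiagonal. -/
def Lpen (F : Type) [Field F] (s : ℕ) : Matrix (Fin s) (Fin (s+1)) (Polynomial F) :=
  Matrix.of fun i j =>
    if (j : ℕ) = (i : ℕ) then -1 else if (j : ℕ) = (i : ℕ) + 1 then X else 0

/-- The block Kronecker pencil `[[λB+A, L_s(λ)ᵀ⊗I_n],[σ L_s(λ)⊗I_n, 0]]` associated with a
pencil `M = λB+A` of size `(s+1)n × (s+1)n`. -/
def blockKron (F : Type) [Field F] (s n : ℕ) (σ : F)
    (M : Matrix (Fin (s+1) × Fin n) (Fin (s+1) × Fin n) (Polynomial F)) :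
    Matrix ((Fin (s+1) × Fin n) ⊕ (Fin s × Fin n)) ((Fin (s+1) × Fin n) ⊕ (Fin s × Fin n))
      (Polynomial F) :=
  Matrix.fromBlocks M (Lpen F s ⊗ₖ (1 : Matrix (Fin n) (Fin n) (Polynomial F)))ᵀ
    (σ • (Lpen F s ⊗ₖ (1 : Matrix (Fin n) (Fin n) (Polynomial F)))) 0

/-- `L` is a linearization of `P`: there are unimodular `U`, `V` with
`U L V = diag(I_m, P)` (up to the fixed identification of index sets). -/
def IsLinearization {F : Type} [Field F] (m : ℕ) {ι ρ : Type*} [Fintype ι] [DecidableEq ι]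
    [Fintype ρ] [DecidableEq ρ] (L : Matrix ι ι (Polynomial F))
    (P : Matrix ρ ρ (Polynomial F)) : Prop :=
  ∃ (e : (Fin m ⊕ ρ) ≃ ι) (U V : Matrix ι ι (Polynomial F)),
    IsUnit U.det ∧ IsUnit V.det ∧
      U * L * V =
        (Matrix.fromBlocks (1 : Matrix (Fin m) (Fin m) (Polynomial F)) 0 0 P).submatrix
          e.symm e.symm

/-- The block conditions `∑_{i+j=d+2-k} B_{ij} + ∑_{i+j=d+1-k} A_{ij} = P_k` for
`k = 0,…,d` (blocks are indexed here `0`-based, so `i+j` `1`-based is `i+j+2` `0`-based). -/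
def blockConds {F : Type} [Field F] {s n : ℕ} (d : ℕ) (Pc : ℕ → Matrix (Fin n) (Fin n) F)
    (A B : Matrix (Fin (s+1) × Fin n) (Fin (s+1) × Fin n) F) : Prop :=
  ∀ k, k ≤ d →
    (∑ p ∈ Finset.univ.filter
        (fun p : Fin (s+1) × Fin (s+1) => (p.1 : ℕ) + (p.2 : ℕ) + 2 + k = d + 2),
        blk B p.1 p.2) +
      (∑ p ∈ Finset.univ.filter
        (fun p : Fin (s+1) × Fin (s+1) => (p.1 : ℕ) + (p.2 : ℕ) + 2 + k = d + 1),
        blk A p.1 p.2) = Pc k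

/-- `L̂_t(λ) ⊗ I_n` (with `t = u+1`): first block column zero, remaining block columns
`L_{t-1}(λ) ⊗ I_n`; the column index is split as `Fin n ⊕ (Fin t × Fin n)`. -/
def LhatB (F : Type) [Field F] (u n : ℕ) :
    Matrix (Fin u × Fin n) (Fin n ⊕ Fin (u+1) × Fin n) (Polynomial F) :=
  Matrix.of fun p q =>
    match q with
    | Sum.inl _ => 0
    | Sum.inr c => (Lpen F u ⊗ₖ (1 : Matrix (Fin n) (Fin n) (Polynomial F))) p c

/-- The modified block Kronecker pencil `[[λB+A, L̂_t(λ)ᵀ⊗I_n],[σ L̂_t(λ)⊗I_n, 0]]`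
(with `t = u+1`). -/
def modBK (F : Type) [Field F] (u n : ℕ) (σ : F)
    (M : Matrix (Fin n ⊕ Fin (u+1) × Fin n) (Fin n ⊕ Fin (u+1) × Fin n) (Polynomial F)) :
    Matrix ((Fin n ⊕ Fin (u+1) × Fin n) ⊕ Fin u × Fin n)
      ((Fin n ⊕ Fin (u+1) × Fin n) ⊕ Fin u × Fin n) (Polynomial F) :=
  Matrix.fromBlocks M (LhatB F u n)ᵀ (σ • LhatB F u n) 0

/-- `Λ̂_t(λ) ⊗ I_n` (with `t = u+1`): the `(t+1)n × 2n` polynomial matrix whose transpose has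
block rows `(I_n, 0, …, 0)` and `(0, λ^{t-1}I_n, …, λ I_n, I_n)`. -/
def LamHatB (F : Type) [Field F] (u n : ℕ) :
    Matrix (Fin n ⊕ Fin (u+1) × Fin n) (Fin 2 × Fin n) (Polynomial F) :=
  Matrix.of fun q c =>
    match q with
    | Sum.inl r => if c.1 = 0 ∧ c.2 = r then 1 else 0
    | Sum.inr p => if c.1 = 1 ∧ c.2 = p.2 then (X : Polynomial F) ^ (u - (p.1 : ℕ)) else 0

/-- `Λ̃_t(λ) ⊗ I_n` (with `t = u+1`): the `(t+1)n × 2n` polynomial matrix whose transpose has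
block rows `(I_n, 0, …, 0)` and `(0, I_n, λ I_n, …, λ^{t-1} I_n)`. -/
def LamTildeB (F : Type) [Field F] (u n : ℕ) :
    Matrix (Fin n ⊕ Fin (u+1) × Fin n) (Fin 2 × Fin n) (Polynomial F) :=
  Matrix.of fun q c =>
    match q with
    | Sum.inl r => if c.1 = 0 ∧ c.2 = r then 1 else 0
    | Sum.inr p => if c.1 = 1 ∧ c.2 = p.2 then (X : Polynomial F) ^ (p.1 : ℕ) else 0

/-- A `2n × 2n` matrix assembled from four `n × n` blocks, indexed by `Fin 2 × Fin n`. -/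
def twoBlock {α : Type*} {n : ℕ} (W₁₁ W₁₂ W₂₁ W₂₂ : Matrix (Fin n) (Fin n) α) :
    Matrix (Fin 2 × Fin n) (Fin 2 × Fin n) α :=
  Matrix.of fun p q =>
    if p.1 = 0 then (if q.1 = 0 then W₁₁ p.2 q.2 else W₁₂ p.2 q.2)
    else (if q.1 = 0 then W₂₁ p.2 q.2 else W₂₂ p.2 q.2)

/-- `Λ_t(λ) ⊗ I_n` (with `t = u+1`), over the split row index `Fin n ⊕ (Fin t × Fin n)`:
block entries `λ^t I_n, λ^{t-1} I_n, …, λ I_n, I_n`. -/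
def LamFullB (F : Type) [Field F] (u n : ℕ) :
    Matrix (Fin n ⊕ Fin (u+1) × Fin n) (Fin n) (Polynomial F) :=
  Matrix.of fun q c =>
    match q with
    | Sum.inl r => if r = c then (X : Polynomial F) ^ (u + 1) else 0
    | Sum.inr p => if p.2 = c then (X : Polynomial F) ^ (u - (p.1 : ℕ)) else 0

/-- `N̂_t(λ) = Ĥ_t(λ) ⊗ I_n` (with `t = u+1`): `Ĥ_t ∈ F[λ]^{(t-1)×(t+1)}` has `(i,j)` entry
`λ^{i+1-j}` if `2 ≤ j ≤ i+1` and `0` otherwise. -/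
def NhatB (F : Type) [Field F] (u n : ℕ) :
    Matrix (Fin u × Fin n) (Fin n ⊕ Fin (u+1) × Fin n) (Polynomial F) :=
  Matrix.of fun p q =>
    match q with
    | Sum.inl _ => 0
    | Sum.inr c =>
        if (c.1 : ℕ) ≤ (p.1 : ℕ) ∧ p.2 = c.2 then
          (X : Polynomial F) ^ ((p.1 : ℕ) - (c.1 : ℕ)) else 0

end


section Aux
open Polynomial Finset
theorem coeff_aux {F : Type} [Field F] (u s k : ℕ) (a : ℕ → F) :
    (∑ i ∈ Finset.range (u+1), C (a i) * X ^ (u - i + s)).coeff k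
      = if s ≤ k ∧ k ≤ u + s then a (u + s - k) else 0 := by
  rw [Polynomial.finset_sum_coeff]
  simp only [Polynomial.coeff_C_mul, Polynomial.coeff_X_pow, mul_ite, mul_one, mul_zero]
  by_cases hk : s ≤ k ∧ k ≤ u + s
  · rw [if_pos hk, Finset.sum_eq_single (u + s - k)]
    · rw [if_pos (by omega)]
    · intro b hb hne
      rw [if_neg (by simp only [Finset.mem_range] at hb; omega)]
    · intro hmem
      exact absurd (by simp only [Finset.mem_range]; omega) hmem
  · rw [if_neg hk]
    refine Finset.sum_eq_zero fun i hi => ?_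
    rw [if_neg (by simp only [Finset.mem_range] at hi; omega)]

theorem lin_eq {F : Type} [Field F] {a b w1 w2 : F}
    (h : C a + X * C b = -(X * C w1) + C w2) : a = w2 ∧ b = -w1 := by
  constructor
  · have := congrArg (Polynomial.coeff · 0) h; simpa using this
  · have := congrArg (Polynomial.coeff · 1) h; simpa using this

theorem key {F : Type} [Field F] (u : ℕ) (a b : ℕ → F) (p : F) :
    (∑ i ∈ Finset.range (u+1), (C (a i) + X * C (b i)) * X ^ (u - i))
      = X ^ (u+1) * C p ↔
    (b 0 = p ∧ (∀ i, i < u → a i = - b (i+1)) ∧ a u = 0) := by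
  have hsplit : (∑ i ∈ Finset.range (u+1), (C (a i) + X * C (b i)) * X ^ (u - i))
      = (∑ i ∈ Finset.range (u+1), C (a i) * X ^ (u - i + 0))
        + (∑ i ∈ Finset.range (u+1), C (b i) * X ^ (u - i + 1)) := by
    rw [← Finset.sum_add_distrib]
    refine Finset.sum_congr rfl fun i hi => ?_
    ring
  have hc : ∀ k, ((∑ i ∈ Finset.range (u+1), C (a i) * X ^ (u - i + 0))
        + (∑ i ∈ Finset.range (u+1), C (b i) * X ^ (u - i + 1))).coeff k
      = (if 0 ≤ k ∧ k ≤ u + 0 then a (u + 0 - k) else 0)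
        + (if 1 ≤ k ∧ k ≤ u + 1 then b (u + 1 - k) else 0) := by
    intro k
    rw [Polynomial.coeff_add, coeff_aux, coeff_aux]
  have hr : ∀ k, ((X : Polynomial F) ^ (u+1) * C p).coeff k = if k = u + 1 then p else 0 := by
    intro k
    rw [mul_comm, Polynomial.coeff_C_mul, Polynomial.coeff_X_pow]
    simp [eq_comm]
  rw [hsplit, Polynomial.ext_iff]
  constructor
  · intro h
    refine ⟨?_, fun i hi => ?_, ?_⟩
    · have h1 := h (u+1)
      rw [hc, hr, if_neg (by omega), if_pos (by omega), if_pos rfl, zero_add] at h1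
      have e : u + 1 - (u + 1) = 0 := by omega
      rwa [e] at h1
    · have h1 := h (u - i)
      rw [hc, hr, if_pos (by omega), if_pos (by omega), if_neg (by omega)] at h1
      have e1 : u + 0 - (u - i) = i := by omega
      have e2 : u + 1 - (u - i) = i + 1 := by omega
      rw [e1, e2] at h1
      exact eq_neg_of_add_eq_zero_left h1
    · have h1 := h 0
      rw [hc, hr, if_pos (by omega), if_neg (by omega), if_neg (by omega), add_zero] at h1
      simpa using h1
  · rintro ⟨h0, h1, h2⟩ k
    rw [hc, hr]
    by_cases hk : k = u + 1
    · subst hk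
      rw [if_neg (by omega), if_pos (by omega), if_pos rfl, zero_add]
      have e : u + 1 - (u + 1) = 0 := by omega
      rw [e, h0]
    · rw [if_neg hk]
      by_cases hk2 : k ≤ u
      · rw [if_pos (by omega)]
        by_cases hk1 : 1 ≤ k
        · rw [if_pos (by omega)]
          have e1 : u + 1 - k = (u + 0 - k) + 1 := by omega
          rw [e1, h1 (u + 0 - k) (by omega)]
          ring
        · rw [if_neg (by omega), add_zero]
          have e : u + 0 - k = u := by omega
          rw [e, h2]
      · rw [if_neg (by omega), if_neg (by omega), add_zero]

end Aux


section Aux2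
open Polynomial Finset

theorem prod_entry {F : Type} [Field F] {n u : ℕ}
    (A12 B12 : Matrix (Fin n) (Fin (u+1) × Fin n) F) (r c : Fin n) :
    (pencil A12 B12 * Lam F u n) r c
      = ∑ i : Fin (u+1), (C (A12 r (i, c)) + X * C (B12 r (i, c))) * X ^ (u - (i:ℕ)) := by
  rw [Matrix.mul_apply, Fintype.sum_prod_type]
  refine Finset.sum_congr rfl fun i _ => ?_
  simp [pencil, matC, Lam, Matrix.add_apply, Matrix.smul_apply, Matrix.map_apply,
    Matrix.of_apply, smul_eq_mul, mul_ite, mul_zero, Finset.sum_ite_eq']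

theorem entry_conds {F : Type} [Field F] {n u : ℕ}
    (Pd : Matrix (Fin n) (Fin n) F)
    (A12 B12 : Matrix (Fin n) (Fin (u+1) × Fin n) F) :
    (pencil A12 B12 * Lam F u n = (X : Polynomial F) ^ (u+1) • matC Pd) ↔
    ∀ r c : Fin n,
      B12 r (0, c) = Pd r c ∧
      (∀ i : Fin (u+1), ∀ hi : (i:ℕ) < u, A12 r (i, c) = - B12 r (⟨(i:ℕ)+1, Nat.succ_lt_succ hi⟩, c)) ∧
      A12 r (Fin.last u, c) = 0 := by
  rw [← Matrix.ext_iff]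
  refine forall_congr' fun r => forall_congr' fun c => ?_
  set a : ℕ → F := fun i => if h : i < u + 1 then A12 r (⟨i, h⟩, c) else 0 with ha
  set b : ℕ → F := fun i => if h : i < u + 1 then B12 r (⟨i, h⟩, c) else 0 with hb
  have hL : (pencil A12 B12 * Lam F u n) r c
      = ∑ i ∈ Finset.range (u+1), (C (a i) + X * C (b i)) * X ^ (u - i) := by
    rw [prod_entry, ← Fin.sum_univ_eq_sum_range
      (fun i => (C (a i) + X * C (b i)) * X ^ (u - i)) (u+1)]
    refine Finset.sum_congr rfl fun i _ => ?_
    simp only [ha, hb, dif_pos i.isLt, Fin.eta]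
  have hR : ((X : Polynomial F) ^ (u+1) • matC Pd) r c = X ^ (u+1) * C (Pd r c) := by
    simp [matC, Matrix.smul_apply, Matrix.map_apply, smul_eq_mul]
  rw [hL, hR, key]
  have e0 : b 0 = B12 r (0, c) := by
    simp only [hb, dif_pos (Nat.succ_pos u)]
    rfl
  have e2 : a u = A12 r (Fin.last u, c) := by
    simp only [ha, dif_pos (Nat.lt_succ_self u)]
    rfl
  have e1 : (∀ i, i < u → a i = - b (i+1)) ↔
      (∀ i : Fin (u+1), ∀ hi : (i:ℕ) < u, A12 r (i, c) = - B12 r (⟨(i:ℕ)+1, Nat.succ_lt_succ hi⟩, c)) := by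
    constructor
    · intro h i hi
      have := h i hi
      simp only [ha, hb, dif_pos (by omega : (i:ℕ) < u+1), dif_pos (by omega : (i:ℕ)+1 < u+1),
        Fin.eta] at this
      exact this
    · intro h i hi
      have := h ⟨i, by omega⟩ hi
      simp only [ha, hb, dif_pos (by omega : i < u+1), dif_pos (by omega : i+1 < u+1)]
      exact this
  rw [e0, e2, e1]

end Aux2

/-- (`t = u+1 ≥ 1`.) A pencil `M₁₂(λ)` of size `n × tn` satisfies
`M₁₂(λ)(Λ_{t-1}(λ)⊗I_n) = λ^t P_d` iff there exist `W_0, …, W_t` with `W_0 = -P_d`,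
`W_t = 0` and `j`-th block `M₁₂^{(j)}(λ) = -λ W_{j-1} + W_j` (blocks `j` 0-based below). -/
theorem stmt_12 {F : Type} [Field F] (n u : ℕ)
    (Pd : Matrix (Fin n) (Fin n) F)
    (A12 B12 : Matrix (Fin n) (Fin (u+1) × Fin n) F) :
    pencil A12 B12 * Lam F u n = (X : Polynomial F) ^ (u+1) • matC Pd ↔
      ∃ W : Fin (u+2) → Matrix (Fin n) (Fin n) F,
        W 0 = -Pd ∧ W (Fin.last (u+1)) = 0 ∧
          ∀ j : Fin (u+1),
            (Matrix.of fun r c => pencil A12 B12 r (j, c)) =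
              -((X : Polynomial F) • matC (W j.castSucc)) + matC (W j.succ) := by
  rw [entry_conds]
  constructor
  · intro h
    refine ⟨fun j => if hj : (j:ℕ) < u + 1
        then -(Matrix.of fun r c => B12 r (⟨(j:ℕ), hj⟩, c)) else 0, ?_, ?_, ?_⟩
    · ext r c
      beta_reduce
      rw [dif_pos (show ((0 : Fin (u+2)) : ℕ) < u + 1 from Nat.succ_pos u)]
      simp only [Matrix.neg_apply, Matrix.of_apply, Fin.eta]
      have h0 := (h r c).1
      have : (⟨0, Nat.succ_pos u⟩ : Fin (u+1)) = 0 := rfl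
      exact congrArg Neg.neg h0
    · simp only [Fin.val_last, dif_neg (lt_irrefl (u+1))]
    · intro j
      ext r c
      simp only [Matrix.of_apply, Matrix.add_apply, Matrix.neg_apply, Matrix.smul_apply,
        Matrix.map_apply, pencil, matC, smul_eq_mul, Fin.coe_castSucc, Fin.val_succ,
        dif_pos j.isLt, Fin.eta]
      by_cases hj : (j:ℕ) < u
      · rw [dif_pos (by omega : (j:ℕ) + 1 < u + 1)]
        simp only [Matrix.neg_apply, Matrix.of_apply]
        rw [(h r c).2.1 j hj]
        simp only [map_neg]
        ring
      · have hju : (j:ℕ) = u := by omega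
        rw [dif_neg (by omega : ¬ ((j:ℕ) + 1 < u + 1))]
        have hjl : j = Fin.last u := Fin.ext hju
        rw [hjl, (h r c).2.2]
        simp
  · rintro ⟨W, hW0, hWlast, hblk⟩ r c
    have hj : ∀ j : Fin (u+1),
        A12 r (j, c) = W j.succ r c ∧ B12 r (j, c) = -(W j.castSucc r c) := by
      intro j
      have hent := congrFun (congrFun (hblk j) r) c
      simp only [Matrix.of_apply, Matrix.add_apply, Matrix.neg_apply, Matrix.smul_apply,
        Matrix.map_apply, pencil, matC, smul_eq_mul] at hent
      exact lin_eq (by rw [hent])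
    refine ⟨?_, ?_, ?_⟩
    · rw [(hj 0).2]
      have e : (0 : Fin (u+1)).castSucc = 0 := rfl
      rw [e, hW0]
      simp
    · intro i hi
      rw [(hj i).1, (hj ⟨(i:ℕ)+1, Nat.succ_lt_succ hi⟩).2]
      have e : (⟨(i:ℕ)+1, Nat.succ_lt_succ hi⟩ : Fin (u+1)).castSucc = i.succ := Fin.ext rfl
      rw [e, neg_neg]
    · rw [(hj (Fin.last u)).1]
      have e : (Fin.last u).succ = Fin.last (u+1) := rfl
      rw [e, hWlast]
      rfl
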